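/- Let r be a positive integer, let G' be a correctly gadgeted graph for parameter r, and let χ : V(G') → ℕ be a labeling that is a distance-2 coloring and is edge-consistent in every r-gball. Then for every pair of distinct vertices u, v of G' belonging to the same gadget sequence, χ(u) ≠ χ(v). -/

import Mathlib

open scoped ENNReal

namespace LCLGadget

/-- Adjacency relation (one direction) of the A-gadget, on vertex indices `0,…,5`
representing the paper's vertices `1,…,6`. -/
def AAdj (i j : Fin 6) : Prop :=
  (i, j) ∈ ([(0,1),(0,2),(1,2),(1,3),(2,4),(3,4),(3,5),(4,5)] : List (Fin 6 × Fin 6))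

variable {V : Type} [LinearOrder V]

/-- The gadget vertices of the gadgeted graph `gadget(G, x)`: a vertex `⟨(a,b,i,j), _⟩`
is vertex `j` of the `i`-th A-gadget on the expanded edge replacing the edge `{a,b}`
(oriented so that `a < b`). -/
abbrev GadgetAux (G : SimpleGraph V) (x : Sym2 V → ℕ) : Type :=
  {p : V × V × ℕ × Fin 6 //
    p.1 < p.2.1 ∧ G.Adj p.1 p.2.1 ∧ p.2.2.1 < x s(p.1, p.2.1)}

/-- Vertices of the gadgeted graph: original vertices (`Sum.inl`) and gadget
vertices (`Sum.inr`). -/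
abbrev GadgetVert (G : SimpleGraph V) (x : Sym2 V → ℕ) : Type :=
  V ⊕ GadgetAux G x

/-- Base adjacency relation of the gadgeted graph (to be symmetrized):
vertex `0` (paper's `1`) of the first gadget is joined to the smaller endpoint,
vertex `5` (paper's `6`) of the last gadget is joined to the larger endpoint,
within one gadget the A-gadget edges are used, and consecutive gadgets of a chain
are joined by an edge from vertex `5` to vertex `0`. -/
def gadgetRel (G : SimpleGraph V) (x : Sym2 V → ℕ) :
    GadgetVert G x → GadgetVert G x → Prop
  | Sum.inl sv, Sum.inr ⟨⟨a, b, i, j⟩, _⟩ =>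
      (sv = a ∧ i = 0 ∧ j = 0) ∨ (sv = b ∧ i = x s(a, b) - 1 ∧ j = 5)
  | Sum.inr ⟨⟨a, b, i, j⟩, _⟩, Sum.inr ⟨⟨a', b', i', j'⟩, _⟩ =>
      a = a' ∧ b = b' ∧ ((i = i' ∧ AAdj j j') ∨ (i' = i + 1 ∧ j = 5 ∧ j' = 0))
  | _, _ => False

/-- The gadgeted graph `G' = gadget(G, x)`. -/
def gadgetGraph (G : SimpleGraph V) (x : Sym2 V → ℕ) : SimpleGraph (GadgetVert G x) :=
  SimpleGraph.fromRel (gadgetRel G x)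

/-- Weight of a (potential) edge of the gadgeted graph: `1/2` if it is incident to an
original vertex, `0` otherwise. -/
noncomputable def wt (G : SimpleGraph V) (x : Sym2 V → ℕ) :
    GadgetVert G x → GadgetVert G x → ℝ≥0∞
  | Sum.inl _, _ => 1/2
  | _, Sum.inl _ => 1/2
  | _, _ => 0

/-- The gadgeted distance `gdist(u,v)`: the minimum total weight of a path
from `u` to `v` in the gadgeted graph. -/
noncomputable def gdist (G : SimpleGraph V) (x : Sym2 V → ℕ) (u v : GadgetVert G x) : ℝ≥0∞ :=
  ⨅ p : (gadgetGraph G x).Walk u v,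
    (p.darts.map fun d => wt G x d.toProd.1 d.toProd.2).sum

/-- Membership of a vertex `u` in the `r`-gball around `c`. -/
def inGball (G : SimpleGraph V) (x : Sym2 V → ℕ) (r : ℕ) (c u : GadgetVert G x) : Prop :=
  gdist G x c u ≤ (r : ℝ≥0∞)

/-- `u` is an original vertex of the gadgeted graph. -/
def IsOriginal (G : SimpleGraph V) (x : Sym2 V → ℕ) (u : GadgetVert G x) : Prop :=
  ∃ v : V, u = Sum.inl v

/-- `u` is an outer vertex: a gadget vertex adjacent to an original vertex. -/
def IsOuter (G : SimpleGraph V) (x : Sym2 V → ℕ) (u : GadgetVert G x) : Prop :=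
  (∃ p, u = Sum.inr p) ∧ ∃ w, IsOriginal G x w ∧ (gadgetGraph G x).Adj u w

/-- `u` is an inner vertex: a gadget vertex not adjacent to any original vertex. -/
def IsInner (G : SimpleGraph V) (x : Sym2 V → ℕ) (u : GadgetVert G x) : Prop :=
  (∃ p, u = Sum.inr p) ∧ ¬ ∃ w, IsOriginal G x w ∧ (gadgetGraph G x).Adj u w

/-- `G` is a 3-regular graph. -/
def ThreeRegular (G : SimpleGraph V) : Prop :=
  ∀ v : V, (G.neighborSet v).ncard = 3

/-- The edge labeling `x` takes positive values on all edges. -/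
def PosLabels (G : SimpleGraph V) (x : Sym2 V → ℕ) : Prop :=
  ∀ e ∈ G.edgeSet, 0 < x e

/-- `x` is a distance-`2r` edge coloring of `G`: any two distinct edges of `G` at
distance at most `2r` from each other receive distinct labels. -/
def DistEdgeColoring (G : SimpleGraph V) (x : Sym2 V → ℕ) (r : ℕ) : Prop :=
  ∀ e ∈ G.edgeSet, ∀ f ∈ G.edgeSet, e ≠ f →
    (∃ a ∈ e, ∃ b ∈ f, G.edist a b ≤ (2 * r : ℕ)) → x e ≠ x f

/-- The gadgeted graph `gadget(G,x)` is correctly gadgeted for parameter `r`. -/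
def CorrectlyGadgeted (G : SimpleGraph V) (x : Sym2 V → ℕ) (r : ℕ) : Prop :=
  ThreeRegular G ∧ PosLabels G x ∧ DistEdgeColoring G x r

/-- `χ` is a distance-2 coloring of the gadgeted graph:
it is injective on `{v} ∪ N(v)` for every vertex `v`. -/
def Dist2Coloring (G : SimpleGraph V) (x : Sym2 V → ℕ) (χ : GadgetVert G x → ℕ) : Prop :=
  ∀ v : GadgetVert G x, Set.InjOn χ (insert v ((gadgetGraph G x).neighborSet v))

/-- `χ` is edge-consistent in every `r`-gball: whenever `{v,u}` is an edge and
`v' ∈ gball_r(v)` has `χ(v') = χ(v)`, there is a neighbor `u'` of `v'` with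
`χ(u') = χ(u)`. -/
def EdgeConsistent (G : SimpleGraph V) (x : Sym2 V → ℕ) (r : ℕ)
    (χ : GadgetVert G x → ℕ) : Prop :=
  ∀ v u : GadgetVert G x, (gadgetGraph G x).Adj v u →
    ∀ v', inGball G x r v v' → χ v' = χ v →
      ∃ u', (gadgetGraph G x).Adj v' u' ∧ χ u' = χ u

/-- `u` lies on a triangle (cycle of length 3) of the gadgeted graph. -/
def OnTriangle (G : SimpleGraph V) (x : Sym2 V → ℕ) (u : GadgetVert G x) : Prop :=
  ∃ a b, (gadgetGraph G x).Adj u a ∧ (gadgetGraph G x).Adj u b ∧ (gadgetGraph G x).Adj a b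

end LCLGadget

namespace LCLGadgetThms
open LCLGadget SimpleGraph

instance (i j : Fin 6) : Decidable (AAdj i j) := by unfold AAdj; infer_instance

variable {V : Type} [LinearOrder V] {G : SimpleGraph V} {x : Sym2 V → ℕ}

lemma AAdj_ne {j j' : Fin 6} (h : AAdj j j') : j ≠ j' := by revert h; revert j j'; decide

/-- Adjacency constructor: same gadget, A-gadget edge. -/
lemma adj_gadget {a b : V} {i : ℕ} {j j' : Fin 6} (h h') (ha : AAdj j j') :
    (gadgetGraph G x).Adj (Sum.inr ⟨(a,b,i,j),h⟩) (Sum.inr ⟨(a,b,i,j'),h'⟩) := by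
  rw [gadgetGraph, SimpleGraph.fromRel_adj]
  refine ⟨?_, Or.inl ⟨rfl, rfl, Or.inl ⟨rfl, ha⟩⟩⟩
  intro he
  apply AAdj_ne ha
  have : ((a,b,i,j) : V × V × ℕ × Fin 6) = (a,b,i,j') := by
    have := Sum.inr.inj he; exact congrArg Subtype.val this
  simpa using this

/-- Adjacency constructor: chain edge between consecutive gadgets. -/
lemma adj_chain {a b : V} {i : ℕ} (h h') :
    (gadgetGraph G x).Adj (Sum.inr ⟨(a,b,i,5),h⟩) (Sum.inr ⟨(a,b,i+1,0),h'⟩) := by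
  rw [gadgetGraph, SimpleGraph.fromRel_adj]
  refine ⟨?_, Or.inl ⟨rfl, rfl, Or.inr ⟨rfl, rfl, rfl⟩⟩⟩
  intro he
  have : ((a,b,i,(5:Fin 6)) : V × V × ℕ × Fin 6) = (a,b,i+1,0) := by
    have := Sum.inr.inj he; exact congrArg Subtype.val this
  simp at this

/-- Adjacency constructor: small endpoint to first gadget. -/
lemma adj_inl_a {a b : V} (h) :
    (gadgetGraph G x).Adj (Sum.inl a) (Sum.inr ⟨(a,b,0,0),h⟩) := by
  rw [gadgetGraph, SimpleGraph.fromRel_adj]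
  exact ⟨by simp, Or.inl (Or.inl ⟨rfl, rfl, rfl⟩)⟩

/-- Adjacency constructor: large endpoint to last gadget. -/
lemma adj_inl_b {a b : V} (h) :
    (gadgetGraph G x).Adj (Sum.inl b) (Sum.inr ⟨(a,b,x s(a,b) - 1,5),h⟩) := by
  rw [gadgetGraph, SimpleGraph.fromRel_adj]
  exact ⟨by simp, Or.inl (Or.inr ⟨rfl, rfl, rfl⟩)⟩

/-- Adjacency destructor for gadget vertices. -/
lemma adj_inr_elim {a b : V} {i : ℕ} {j : Fin 6} {h} {z : GadgetVert G x}
    (hadj : (gadgetGraph G x).Adj (Sum.inr ⟨(a,b,i,j),h⟩) z) :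
    (z = Sum.inl a ∧ i = 0 ∧ j = 0) ∨ (z = Sum.inl b ∧ i = x s(a,b) - 1 ∧ j = 5) ∨
    (∃ (j' : Fin 6) (h' : _), z = Sum.inr ⟨(a,b,i,j'),h'⟩ ∧ (AAdj j j' ∨ AAdj j' j)) ∨
    (∃ h' : _, j = 5 ∧ z = Sum.inr ⟨(a,b,i+1,0),h'⟩) ∨
    (∃ (i₀ : ℕ) (h' : _), i = i₀+1 ∧ j = 0 ∧ z = Sum.inr ⟨(a,b,i₀,5),h'⟩) := by
  rw [gadgetGraph, SimpleGraph.fromRel_adj] at hadj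
  obtain ⟨hne, hrel | hrel⟩ := hadj
  · cases z with
    | inl sv => exact hrel.elim
    | inr q =>
      obtain ⟨⟨a',b',i',j'⟩, hp'⟩ := q
      obtain ⟨rfl, rfl, hc⟩ := hrel
      rcases hc with ⟨hii, haj⟩ | ⟨hi', hj5, hj0⟩
      · subst hii
        exact Or.inr (Or.inr (Or.inl ⟨j', hp', rfl, Or.inl haj⟩))
      · subst hi'; subst hj5; subst hj0
        exact Or.inr (Or.inr (Or.inr (Or.inl ⟨hp', rfl, rfl⟩)))
  · cases z with
    | inl sv =>
      rcases hrel with ⟨rfl, hi, hj⟩ | ⟨rfl, hi, hj⟩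
      · exact Or.inl ⟨rfl, hi, hj⟩
      · exact Or.inr (Or.inl ⟨rfl, hi, hj⟩)
    | inr q =>
      obtain ⟨⟨a',b',i',j'⟩, hp'⟩ := q
      obtain ⟨rfl, rfl, hc⟩ := hrel
      rcases hc with ⟨hii, haj⟩ | ⟨hi, hj5, hj0⟩
      · subst hii
        exact Or.inr (Or.inr (Or.inl ⟨j', hp', rfl, Or.inr haj⟩))
      · subst hj5; subst hj0
        exact Or.inr (Or.inr (Or.inr (Or.inr ⟨i', hp', hi, rfl, rfl⟩)))

/-- Adjacency destructor for original vertices. -/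
lemma adj_inl_elim {o : V} {z : GadgetVert G x}
    (hadj : (gadgetGraph G x).Adj (Sum.inl o) z) :
    ∃ (a b : V) (i : ℕ) (j : Fin 6) (hp : _), z = Sum.inr ⟨(a,b,i,j),hp⟩ ∧
      ((o = a ∧ i = 0 ∧ j = 0) ∨ (o = b ∧ i = x s(a,b) - 1 ∧ j = 5)) := by
  rw [gadgetGraph, SimpleGraph.fromRel_adj] at hadj
  obtain ⟨hne, hrel | hrel⟩ := hadj
  · cases z with
    | inl sv => exact hrel.elim
    | inr q =>
      obtain ⟨⟨a',b',i',j'⟩, hp'⟩ := q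
      exact ⟨a', b', i', j', hp', rfl, hrel⟩
  · cases z with
    | inl sv => exact hrel.elim
    | inr q => obtain ⟨⟨a',b',i',j'⟩, hp'⟩ := q; exact hrel.elim

end LCLGadgetThms

namespace LCLGadgetThms
open LCLGadget SimpleGraph

variable {V : Type} [LinearOrder V] {G : SimpleGraph V} {x : Sym2 V → ℕ}
variable {r : ℕ} {χ : GadgetVert G x → ℕ}

/-- Adjacent vertices get distinct colors. -/
lemma F1a (hχ2 : Dist2Coloring G x χ) {u v : GadgetVert G x}
    (h : (gadgetGraph G x).Adj u v) : χ u ≠ χ v := fun he =>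
  h.ne ((hχ2 u) (Set.mem_insert _ _) (Set.mem_insert_of_mem _ h) he)

/-- Vertices with a common neighbor get distinct colors. -/
lemma F1b (hχ2 : Dist2Coloring G x χ) {w u v : GadgetVert G x}
    (h1 : (gadgetGraph G x).Adj w u) (h2 : (gadgetGraph G x).Adj w v) (hne : u ≠ v) :
    χ u ≠ χ v := fun he =>
  hne ((hχ2 w) (Set.mem_insert_of_mem _ h1) (Set.mem_insert_of_mem _ h2) he)

/-- Consistency partner, which is moreover distinct from the mirrored vertex. -/
lemma partner (hχ2 : Dist2Coloring G x χ) (hχc : EdgeConsistent G x r χ)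
    {v u v' : GadgetVert G x} (hadj : (gadgetGraph G x).Adj v u)
    (hd : gdist G x v v' ≤ (r : ℝ≥0∞)) (he : χ v' = χ v) (hne : v ≠ v') :
    ∃ u', (gadgetGraph G x).Adj v' u' ∧ χ u' = χ u ∧ u' ≠ u := by
  obtain ⟨u', h1, h2⟩ := hχc v u hadj v' hd he
  refine ⟨u', h1, h2, ?_⟩
  intro heq
  rw [heq] at h1
  exact hne (((hχ2 u) (Set.mem_insert_of_mem _ hadj.symm)
    (Set.mem_insert_of_mem _ h1.symm) he.symm))

/-- Weight of a walk. -/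
noncomputable def wlen {u v : GadgetVert G x} (p : (gadgetGraph G x).Walk u v) : ℝ≥0∞ :=
  (p.darts.map fun d => wt G x d.toProd.1 d.toProd.2).sum

lemma gdist_eq (u v : GadgetVert G x) :
    gdist G x u v = ⨅ p : (gadgetGraph G x).Walk u v, wlen p := rfl

lemma gdist_le_wlen {u v : GadgetVert G x} (p : (gadgetGraph G x).Walk u v) :
    gdist G x u v ≤ wlen p := iInf_le _ p

lemma wlen_nil {u : GadgetVert G x} : wlen (Walk.nil : (gadgetGraph G x).Walk u u) = 0 := rfl

lemma wlen_cons {u v w : GadgetVert G x} (h : (gadgetGraph G x).Adj u v)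
    (p : (gadgetGraph G x).Walk v w) :
    wlen (Walk.cons h p) = wt G x u v + wlen p := by
  simp [wlen, Walk.darts_cons]

lemma wlen_append {u v w : GadgetVert G x} (p : (gadgetGraph G x).Walk u v)
    (q : (gadgetGraph G x).Walk v w) : wlen (p.append q) = wlen p + wlen q := by
  simp [wlen, Walk.darts_append]

lemma gdist_self (u : GadgetVert G x) : gdist G x u u ≤ 0 := by
  simpa [wlen_nil] using gdist_le_wlen (Walk.nil : (gadgetGraph G x).Walk u u)

lemma gdist_adj {u v : GadgetVert G x} (h : (gadgetGraph G x).Adj u v) :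
    gdist G x u v ≤ wt G x u v := by
  have := gdist_le_wlen (Walk.cons h Walk.nil)
  simpa [wlen_cons, wlen_nil] using this

lemma gdist_triangle (u v w : GadgetVert G x) :
    gdist G x u w ≤ gdist G x u v + gdist G x v w := by
  rcases isEmpty_or_nonempty ((gadgetGraph G x).Walk u v) with he | hne
  · rw [gdist_eq u v, iInf_of_empty]
    simp
  rcases isEmpty_or_nonempty ((gadgetGraph G x).Walk v w) with he' | hne'
  · rw [gdist_eq v w, iInf_of_empty]
    simp
  have key : gdist G x u v + gdist G x v w
      = ⨅ p : (gadgetGraph G x).Walk u v, ⨅ q : (gadgetGraph G x).Walk v w, (wlen p + wlen q) := by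
    rw [gdist_eq u v, gdist_eq v w, ENNReal.iInf_add]
    exact iInf_congr fun p => ENNReal.add_iInf
  rw [key]
  refine le_iInf fun p => le_iInf fun q => ?_
  calc gdist G x u w ≤ wlen (p.append q) := gdist_le_wlen _
    _ = wlen p + wlen q := wlen_append p q

lemma wt_inr_inr (p q : GadgetAux G x) : wt G x (Sum.inr p) (Sum.inr q) = 0 := rfl
lemma wt_inr_inl (p : GadgetAux G x) (o : V) : wt G x (Sum.inr p) (Sum.inl o) = 1/2 := rfl
lemma wt_inl (o : V) (z : GadgetVert G x) : wt G x (Sum.inl o) z = 1/2 := by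
  cases z <;> rfl

lemma half_le_r (hr : 0 < r) : (1/2 : ℝ≥0∞) ≤ (r : ℝ≥0∞) := by
  have h1 : (1 : ℝ≥0∞) ≤ (r : ℝ≥0∞) := by exact_mod_cast hr
  calc (1/2 : ℝ≥0∞) ≤ 1 := by norm_num
    _ ≤ r := h1

lemma one_le_r (hr : 0 < r) : (1 : ℝ≥0∞) ≤ (r : ℝ≥0∞) := by exact_mod_cast hr

end LCLGadgetThms

namespace LCLGadgetThms
open LCLGadget SimpleGraph

variable {V : Type} [LinearOrder V]

/-- The structure of the end gadget of an expanded edge attached to an original vertex `O`,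
with `y` the end vertex adjacent to `O` and `v1, …, v5` the deeper vertices of the end
gadget (in mirror-invariant depth order); `w` is the third neighbor of `v5`. -/
structure EndBundle (G : SimpleGraph V) (x : Sym2 V → ℕ) (O y : GadgetVert G x) : Type where
  v1 : GadgetVert G x
  v2 : GadgetVert G x
  v3 : GadgetVert G x
  v4 : GadgetVert G x
  v5 : GadgetVert G x
  w : GadgetVert G x
  aO0 : (gadgetGraph G x).Adj O y
  a01 : (gadgetGraph G x).Adj y v1
  a02 : (gadgetGraph G x).Adj y v2
  a12 : (gadgetGraph G x).Adj v1 v2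
  a13 : (gadgetGraph G x).Adj v1 v3
  a24 : (gadgetGraph G x).Adj v2 v4
  a34 : (gadgetGraph G x).Adj v3 v4
  a35 : (gadgetGraph G x).Adj v3 v5
  a45 : (gadgetGraph G x).Adj v4 v5
  N0 : ∀ z, (gadgetGraph G x).Adj y z → z = O ∨ z = v1 ∨ z = v2
  N1 : ∀ z, (gadgetGraph G x).Adj v1 z → z = y ∨ z = v2 ∨ z = v3
  N2 : ∀ z, (gadgetGraph G x).Adj v2 z → z = y ∨ z = v1 ∨ z = v4
  N3 : ∀ z, (gadgetGraph G x).Adj v3 z → z = v1 ∨ z = v4 ∨ z = v5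
  N4 : ∀ z, (gadgetGraph G x).Adj v4 z → z = v2 ∨ z = v3 ∨ z = v5
  N5 : ∀ z, (gadgetGraph G x).Adj v5 z → z = v3 ∨ z = v4 ∨ z = w
  dOy : y ≠ O
  dO1 : v1 ≠ O
  dO2 : v2 ≠ O
  dO3 : v3 ≠ O
  dO4 : v4 ≠ O
  dO5 : v5 ≠ O
  d05 : y ≠ v5
  d14 : v1 ≠ v4
  d23 : v2 ≠ v3
  d03 : y ≠ v3
  d04 : y ≠ v4
  gO1 : gdist G x O v1 ≤ 1/2
  gO2 : gdist G x O v2 ≤ 1/2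
  gO3 : gdist G x O v3 ≤ 1/2
  gO4 : gdist G x O v4 ≤ 1/2
  g05 : gdist G x y v5 ≤ 0

variable {G : SimpleGraph V} {x : Sym2 V → ℕ} {r : ℕ} {χ : GadgetVert G x → ℕ}

/-- The end vertex of a chain cannot share its color with the depth-5 vertex. -/
lemma P05kill (hr : 0 < r) (hχ2 : Dist2Coloring G x χ) (hχc : EdgeConsistent G x r χ)
    {O y : GadgetVert G x} (B : EndBundle G x O y) (hc : χ y = χ B.v5) : False := by
  obtain ⟨α, hα1, hα2, hα3⟩ :=
    partner hχ2 hχc B.a01 (le_trans B.g05 zero_le) hc.symm B.d05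
  obtain ⟨β, hβ1, hβ2, hβ3⟩ :=
    partner hχ2 hχc B.a02 (le_trans B.g05 zero_le) hc.symm B.d05
  have hαw : α = B.w := by
    rcases B.N5 α hα1 with h | h | h
    · exact absurd (h ▸ hα2).symm (F1a hχ2 B.a13)
    · exact absurd (h ▸ hα2).symm (F1b hχ2 B.a13.symm B.a34 B.d14)
    · exact h
  have hβw : β = B.w := by
    rcases B.N5 β hβ1 with h | h | h
    · exact absurd (h ▸ hβ2).symm (F1b hχ2 B.a12 B.a13 B.d23)
    · exact absurd (h ▸ hβ2).symm (F1a hχ2 B.a24)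
    · exact h
  exact F1a hχ2 B.a12 ((hαw ▸ hα2).symm.trans (hβw ▸ hβ2))

/-- The original vertex `O` cannot share its color with the depth-3 vertex. -/
lemma O3kill (hr : 0 < r) (hχ2 : Dist2Coloring G x χ) (hχc : EdgeConsistent G x r χ)
    {O y : GadgetVert G x} (B : EndBundle G x O y) (hc : χ O = χ B.v3) : False := by
  obtain ⟨π, hπ1, hπ2, hπ3⟩ :=
    partner hχ2 hχc B.aO0 (le_trans B.gO3 (half_le_r hr)) hc.symm B.dO3.symm
  rcases B.N3 π hπ1 with h | h | h
  · exact (F1a hχ2 B.a01) (h ▸ hπ2).symm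
  · exact (F1b hχ2 B.a02.symm B.a24 B.d04) (h ▸ hπ2).symm
  · exact P05kill hr hχ2 hχc B (h ▸ hπ2).symm

/-- The original vertex `O` cannot share its color with the depth-4 vertex. -/
lemma O4kill (hr : 0 < r) (hχ2 : Dist2Coloring G x χ) (hχc : EdgeConsistent G x r χ)
    {O y : GadgetVert G x} (B : EndBundle G x O y) (hc : χ O = χ B.v4) : False := by
  obtain ⟨π, hπ1, hπ2, hπ3⟩ :=
    partner hχ2 hχc B.aO0 (le_trans B.gO4 (half_le_r hr)) hc.symm B.dO4.symm
  rcases B.N4 π hπ1 with h | h | h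
  · exact (F1a hχ2 B.a02) (h ▸ hπ2).symm
  · exact (F1b hχ2 B.a01.symm B.a13 B.d03) (h ▸ hπ2).symm
  · exact P05kill hr hχ2 hχc B (h ▸ hπ2).symm

end LCLGadgetThms

namespace LCLGadgetThms
open LCLGadget SimpleGraph

variable {V : Type} [LinearOrder V] {G : SimpleGraph V} {x : Sym2 V → ℕ}

lemma gdist_adj_inr {p q : GadgetAux G x} (h : (gadgetGraph G x).Adj (Sum.inr p) (Sum.inr q)) :
    gdist G x (Sum.inr p) (Sum.inr q) ≤ 0 :=
  le_of_le_of_eq (gdist_adj h) (wt_inr_inr p q)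

lemma gdist_extend0 {u : GadgetVert G x} {p q : GadgetAux G x} {c : ℝ≥0∞}
    (hu : gdist G x u (Sum.inr p) ≤ c) (h : (gadgetGraph G x).Adj (Sum.inr p) (Sum.inr q)) :
    gdist G x u (Sum.inr q) ≤ c := by
  calc gdist G x u (Sum.inr q) ≤ gdist G x u (Sum.inr p) + gdist G x (Sum.inr p) (Sum.inr q) :=
        gdist_triangle _ _ _
    _ ≤ c + 0 := add_le_add hu (gdist_adj_inr h)
    _ = c := add_zero c

lemma gdist_inl_adj {o : V} {z : GadgetVert G x} (h : (gadgetGraph G x).Adj (Sum.inl o) z) :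
    gdist G x (Sum.inl o) z ≤ 1/2 :=
  le_of_le_of_eq (gdist_adj h) (wt_inl o z)

end LCLGadgetThms

namespace LCLGadgetThms
open LCLGadget SimpleGraph

variable {V : Type} [LinearOrder V] {G : SimpleGraph V} {x : Sym2 V → ℕ}

set_option maxHeartbeats 1000000 in
/-- Construction of the end bundle, orientation with `o` the smaller endpoint. -/
def endbundleA {a b : V} (hp : a < b ∧ G.Adj a b ∧ 0 < x s(a,b)) :
    EndBundle G x (Sum.inl a) (Sum.inr ⟨(a,b,0,0), ⟨hp.1, hp.2.1, hp.2.2⟩⟩) := by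
  have h0 : 0 < x s(a,b) := hp.2.2
  refine
    { v1 := Sum.inr ⟨(a,b,0,1), hp⟩
      v2 := Sum.inr ⟨(a,b,0,2), hp⟩
      v3 := Sum.inr ⟨(a,b,0,3), hp⟩
      v4 := Sum.inr ⟨(a,b,0,4), hp⟩
      v5 := Sum.inr ⟨(a,b,0,5), hp⟩
      w := if hx : x s(a,b) = 1 then Sum.inl b
           else Sum.inr ⟨(a,b,1,0), ⟨hp.1, hp.2.1, by show 1 < x s(a,b); omega⟩⟩
      aO0 := adj_inl_a _
      a01 := adj_gadget _ _ (by decide)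
      a02 := adj_gadget _ _ (by decide)
      a12 := adj_gadget _ _ (by decide)
      a13 := adj_gadget _ _ (by decide)
      a24 := adj_gadget _ _ (by decide)
      a34 := adj_gadget _ _ (by decide)
      a35 := adj_gadget _ _ (by decide)
      a45 := adj_gadget _ _ (by decide)
      N0 := ?_, N1 := ?_, N2 := ?_, N3 := ?_, N4 := ?_, N5 := ?_
      dOy := by simp
      dO1 := by simp
      dO2 := by simp
      dO3 := by simp
      dO4 := by simp
      dO5 := by simp
      d05 := by intro he; have := congrArg Subtype.val (Sum.inr.inj he); simp [Prod.ext_iff] at this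
      d14 := by intro he; have := congrArg Subtype.val (Sum.inr.inj he); simp [Prod.ext_iff] at this
      d23 := by intro he; have := congrArg Subtype.val (Sum.inr.inj he); simp [Prod.ext_iff] at this
      d03 := by intro he; have := congrArg Subtype.val (Sum.inr.inj he); simp [Prod.ext_iff] at this
      d04 := by intro he; have := congrArg Subtype.val (Sum.inr.inj he); simp [Prod.ext_iff] at this
      gO1 := gdist_extend0 (gdist_inl_adj (adj_inl_a hp)) (adj_gadget hp hp (by decide))
      gO2 := gdist_extend0 (gdist_inl_adj (adj_inl_a hp)) (adj_gadget hp hp (by decide))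
      gO3 := gdist_extend0 (gdist_extend0 (gdist_inl_adj (adj_inl_a hp))
               (adj_gadget hp hp (by decide : AAdj 0 1))) (adj_gadget hp hp (by decide : AAdj 1 3))
      gO4 := gdist_extend0 (gdist_extend0 (gdist_inl_adj (adj_inl_a hp))
               (adj_gadget hp hp (by decide : AAdj 0 2))) (adj_gadget hp hp (by decide : AAdj 2 4))
      g05 := gdist_extend0 (gdist_extend0 (gdist_adj_inr (adj_gadget hp hp (by decide : AAdj 0 1)))
               (adj_gadget hp hp (by decide : AAdj 1 3))) (adj_gadget hp hp (by decide : AAdj 3 5)) }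
  · -- N0
    intro z hadj
    rcases adj_inr_elim hadj with ⟨rfl,h2,h3⟩|⟨rfl,h2,h3⟩|⟨j',h',rfl,hA⟩|⟨h',h5,rfl⟩|⟨i0,h',hi,h0,rfl⟩
    · exact Or.inl rfl
    · exact absurd h3 (by decide)
    · fin_cases j' <;>
        first
          | exact absurd hA (by decide)
          | exact Or.inr (Or.inl rfl)
          | exact Or.inr (Or.inr rfl)
    · exact absurd h5 (by decide)
    · omega
  · -- N1
    intro z hadj
    rcases adj_inr_elim hadj with ⟨rfl,h2,h3⟩|⟨rfl,h2,h3⟩|⟨j',h',rfl,hA⟩|⟨h',h5,rfl⟩|⟨i0,h',hi,h0,rfl⟩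
    · exact absurd h3 (by decide)
    · exact absurd h3 (by decide)
    · fin_cases j' <;>
        first
          | exact absurd hA (by decide)
          | exact Or.inl rfl
          | exact Or.inr (Or.inl rfl)
          | exact Or.inr (Or.inr rfl)
    · exact absurd h5 (by decide)
    · exact absurd h0 (by decide)
  · -- N2
    intro z hadj
    rcases adj_inr_elim hadj with ⟨rfl,h2,h3⟩|⟨rfl,h2,h3⟩|⟨j',h',rfl,hA⟩|⟨h',h5,rfl⟩|⟨i0,h',hi,h0,rfl⟩
    · exact absurd h3 (by decide)
    · exact absurd h3 (by decide)
    · fin_cases j' <;>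
        first
          | exact absurd hA (by decide)
          | exact Or.inl rfl
          | exact Or.inr (Or.inl rfl)
          | exact Or.inr (Or.inr rfl)
    · exact absurd h5 (by decide)
    · exact absurd h0 (by decide)
  · -- N3
    intro z hadj
    rcases adj_inr_elim hadj with ⟨rfl,h2,h3⟩|⟨rfl,h2,h3⟩|⟨j',h',rfl,hA⟩|⟨h',h5,rfl⟩|⟨i0,h',hi,h0,rfl⟩
    · exact absurd h3 (by decide)
    · exact absurd h3 (by decide)
    · fin_cases j' <;>
        first
          | exact absurd hA (by decide)
          | exact Or.inl rfl
          | exact Or.inr (Or.inl rfl)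
          | exact Or.inr (Or.inr rfl)
    · exact absurd h5 (by decide)
    · exact absurd h0 (by decide)
  · -- N4
    intro z hadj
    rcases adj_inr_elim hadj with ⟨rfl,h2,h3⟩|⟨rfl,h2,h3⟩|⟨j',h',rfl,hA⟩|⟨h',h5,rfl⟩|⟨i0,h',hi,h0,rfl⟩
    · exact absurd h3 (by decide)
    · exact absurd h3 (by decide)
    · fin_cases j' <;>
        first
          | exact absurd hA (by decide)
          | exact Or.inl rfl
          | exact Or.inr (Or.inl rfl)
          | exact Or.inr (Or.inr rfl)
    · exact absurd h5 (by decide)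
    · exact absurd h0 (by decide)
  · -- N5
    intro z hadj
    rcases adj_inr_elim hadj with ⟨rfl,h2,h3⟩|⟨rfl,h2,h3⟩|⟨j',h',rfl,hA⟩|⟨h',h5,rfl⟩|⟨i0,h',hi,h0,rfl⟩
    · exact absurd h3 (by decide)
    · -- z = inl b, with 0 = n - 1, so n = 1 and w = inl b
      have hx1 : x s(a,b) = 1 := by omega
      refine Or.inr (Or.inr ?_)
      rw [dif_pos hx1]
    · fin_cases j' <;>
        first
          | exact absurd hA (by decide)
          | exact Or.inl rfl
          | exact Or.inr (Or.inl rfl)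
    · -- chain-next: z = (1,0), so n ≥ 2 and w = z
      have h'' : 1 < x s(a,b) := h'.2.2
      have hx1 : ¬ x s(a,b) = 1 := by omega
      refine Or.inr (Or.inr ?_)
      rw [dif_neg hx1]
    · exact absurd h0 (by decide)

end LCLGadgetThms

namespace LCLGadgetThms
open LCLGadget SimpleGraph

variable {V : Type} [LinearOrder V] {G : SimpleGraph V} {x : Sym2 V → ℕ}

set_option maxHeartbeats 1000000 in
/-- Construction of the end bundle, orientation with `o` the larger endpoint. -/
def endbundleB {a b : V} (hp : a < b ∧ G.Adj a b ∧ 0 < x s(a,b))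
    (hm : x s(a,b) - 1 < x s(a,b)) :
    EndBundle G x (Sum.inl b) (Sum.inr ⟨(a,b,x s(a,b) - 1,5), ⟨hp.1, hp.2.1, hm⟩⟩) := by
  have h0 : 0 < x s(a,b) := hp.2.2
  have P : a < b ∧ G.Adj a b ∧ x s(a,b) - 1 < x s(a,b) := ⟨hp.1, hp.2.1, hm⟩
  refine
    { v1 := Sum.inr ⟨(a,b,x s(a,b) - 1,4), P⟩
      v2 := Sum.inr ⟨(a,b,x s(a,b) - 1,3), P⟩
      v3 := Sum.inr ⟨(a,b,x s(a,b) - 1,2), P⟩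
      v4 := Sum.inr ⟨(a,b,x s(a,b) - 1,1), P⟩
      v5 := Sum.inr ⟨(a,b,x s(a,b) - 1,0), P⟩
      w := if hx : x s(a,b) = 1 then Sum.inl a
           else Sum.inr ⟨(a,b, x s(a,b) - 2, 5), ⟨hp.1, hp.2.1, by show x s(a,b) - 2 < x s(a,b); omega⟩⟩
      aO0 := adj_inl_b _
      a01 := (adj_gadget _ _ (by decide : AAdj 4 5)).symm
      a02 := (adj_gadget _ _ (by decide : AAdj 3 5)).symm
      a12 := (adj_gadget _ _ (by decide : AAdj 3 4)).symm
      a13 := (adj_gadget _ _ (by decide : AAdj 2 4)).symm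
      a24 := (adj_gadget _ _ (by decide : AAdj 1 3)).symm
      a34 := (adj_gadget _ _ (by decide : AAdj 1 2)).symm
      a35 := (adj_gadget _ _ (by decide : AAdj 0 2)).symm
      a45 := (adj_gadget _ _ (by decide : AAdj 0 1)).symm
      N0 := ?_, N1 := ?_, N2 := ?_, N3 := ?_, N4 := ?_, N5 := ?_
      dOy := by simp
      dO1 := by simp
      dO2 := by simp
      dO3 := by simp
      dO4 := by simp
      dO5 := by simp
      d05 := by intro he; have := congrArg Subtype.val (Sum.inr.inj he); simp [Prod.ext_iff] at this
      d14 := by intro he; have := congrArg Subtype.val (Sum.inr.inj he); simp [Prod.ext_iff] at this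
      d23 := by intro he; have := congrArg Subtype.val (Sum.inr.inj he); simp [Prod.ext_iff] at this
      d03 := by intro he; have := congrArg Subtype.val (Sum.inr.inj he); simp [Prod.ext_iff] at this
      d04 := by intro he; have := congrArg Subtype.val (Sum.inr.inj he); simp [Prod.ext_iff] at this
      gO1 := gdist_extend0 (gdist_inl_adj (adj_inl_b P))
               ((adj_gadget P P (by decide : AAdj 4 5)).symm)
      gO2 := gdist_extend0 (gdist_inl_adj (adj_inl_b P))
               ((adj_gadget P P (by decide : AAdj 3 5)).symm)
      gO3 := gdist_extend0 (gdist_extend0 (gdist_inl_adj (adj_inl_b P))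
               ((adj_gadget P P (by decide : AAdj 4 5)).symm))
               ((adj_gadget P P (by decide : AAdj 2 4)).symm)
      gO4 := gdist_extend0 (gdist_extend0 (gdist_inl_adj (adj_inl_b P))
               ((adj_gadget P P (by decide : AAdj 3 5)).symm))
               ((adj_gadget P P (by decide : AAdj 1 3)).symm)
      g05 := gdist_extend0 (gdist_extend0 (gdist_adj_inr
               ((adj_gadget P P (by decide : AAdj 4 5)).symm))
               ((adj_gadget P P (by decide : AAdj 2 4)).symm))
               ((adj_gadget P P (by decide : AAdj 0 2)).symm) }
  · -- N0 : neighbors of y = (m,5)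
    intro z hadj
    rcases adj_inr_elim hadj with ⟨rfl,h2,h3⟩|⟨rfl,h2,h3⟩|⟨j',h',rfl,hA⟩|⟨h',h5,rfl⟩|⟨i0,h',hi,h0',rfl⟩
    · exact absurd h3 (by decide)
    · exact Or.inl rfl
    · fin_cases j' <;>
        first
          | exact absurd hA (by decide)
          | exact Or.inr (Or.inl rfl)
          | exact Or.inr (Or.inr rfl)
    · have h'' : x s(a,b) - 1 + 1 < x s(a,b) := h'.2.2
      omega
    · exact absurd h0' (by decide)
  · -- N1 : neighbors of v1 = (m,4)
    intro z hadj
    rcases adj_inr_elim hadj with ⟨rfl,h2,h3⟩|⟨rfl,h2,h3⟩|⟨j',h',rfl,hA⟩|⟨h',h5,rfl⟩|⟨i0,h',hi,h0',rfl⟩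
    · exact absurd h3 (by decide)
    · exact absurd h3 (by decide)
    · fin_cases j' <;>
        first
          | exact absurd hA (by decide)
          | exact Or.inl rfl
          | exact Or.inr (Or.inl rfl)
          | exact Or.inr (Or.inr rfl)
    · exact absurd h5 (by decide)
    · exact absurd h0' (by decide)
  · -- N2 : neighbors of v2 = (m,3)
    intro z hadj
    rcases adj_inr_elim hadj with ⟨rfl,h2,h3⟩|⟨rfl,h2,h3⟩|⟨j',h',rfl,hA⟩|⟨h',h5,rfl⟩|⟨i0,h',hi,h0',rfl⟩
    · exact absurd h3 (by decide)
    · exact absurd h3 (by decide)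
    · fin_cases j' <;>
        first
          | exact absurd hA (by decide)
          | exact Or.inl rfl
          | exact Or.inr (Or.inl rfl)
          | exact Or.inr (Or.inr rfl)
    · exact absurd h5 (by decide)
    · exact absurd h0' (by decide)
  · -- N3 : neighbors of v3 = (m,2)
    intro z hadj
    rcases adj_inr_elim hadj with ⟨rfl,h2,h3⟩|⟨rfl,h2,h3⟩|⟨j',h',rfl,hA⟩|⟨h',h5,rfl⟩|⟨i0,h',hi,h0',rfl⟩
    · exact absurd h3 (by decide)
    · exact absurd h3 (by decide)
    · fin_cases j' <;>
        first
          | exact absurd hA (by decide)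
          | exact Or.inl rfl
          | exact Or.inr (Or.inl rfl)
          | exact Or.inr (Or.inr rfl)
    · exact absurd h5 (by decide)
    · exact absurd h0' (by decide)
  · -- N4 : neighbors of v4 = (m,1)
    intro z hadj
    rcases adj_inr_elim hadj with ⟨rfl,h2,h3⟩|⟨rfl,h2,h3⟩|⟨j',h',rfl,hA⟩|⟨h',h5,rfl⟩|⟨i0,h',hi,h0',rfl⟩
    · exact absurd h3 (by decide)
    · exact absurd h3 (by decide)
    · fin_cases j' <;>
        first
          | exact absurd hA (by decide)
          | exact Or.inl rfl
          | exact Or.inr (Or.inl rfl)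
          | exact Or.inr (Or.inr rfl)
    · exact absurd h5 (by decide)
    · exact absurd h0' (by decide)
  · -- N5 : neighbors of v5 = (m,0)
    intro z hadj
    rcases adj_inr_elim hadj with ⟨rfl,h2,h3⟩|⟨rfl,h2,h3⟩|⟨j',h',rfl,hA⟩|⟨h',h5,rfl⟩|⟨i0,h',hi,h0',rfl⟩
    · -- z = inl a : x = 1 and w = inl a
      have hx1 : x s(a,b) = 1 := by omega
      refine Or.inr (Or.inr ?_)
      rw [dif_pos hx1]
    · exact absurd h3 (by decide)
    · fin_cases j' <;>
        first
          | exact absurd hA (by decide)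
          | exact Or.inl rfl
          | exact Or.inr (Or.inl rfl)
    · exact absurd h5 (by decide)
    · -- chain-prev: z = (i0, 5) with m = i0 + 1, so x ≥ 2 and w = z
      have hx1 : ¬ x s(a,b) = 1 := by omega
      have hi0 : i0 = x s(a,b) - 2 := by omega
      subst hi0
      refine Or.inr (Or.inr ?_)
      rw [dif_neg hx1]

end LCLGadgetThms

namespace LCLGadgetThms
open LCLGadget SimpleGraph

variable {V : Type} [LinearOrder V] {G : SimpleGraph V} {x : Sym2 V → ℕ}

/-- Construction of the end bundle for any neighbor of an original vertex. -/
lemma endbundle {o : V} {y : GadgetVert G x} (h : (gadgetGraph G x).Adj (Sum.inl o) y) :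
    Nonempty (EndBundle G x (Sum.inl o) y) := by
  obtain ⟨a, b, i, j, hp, rfl, hcase⟩ := adj_inl_elim h
  rcases hcase with ⟨rfl, rfl, rfl⟩ | ⟨rfl, hi, rfl⟩
  · exact ⟨endbundleA ⟨hp.1, hp.2.1, hp.2.2⟩⟩
  · subst hi
    exact ⟨endbundleB ⟨hp.1, hp.2.1, by have := hp.2.2; omega⟩ hp.2.2⟩

variable {r : ℕ} {χ : GadgetVert G x → ℕ}

lemma one_half_add : (1/2 : ℝ≥0∞) + 1/2 = 1 := ENNReal.add_halves 1

/-- An original vertex cannot share a color with a nearby gadget vertex lying on a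
triangle. -/
lemma mixedkill (hr : 0 < r) (hχ2 : Dist2Coloring G x χ) (hχc : EdgeConsistent G x r χ)
    {o : V} {z s t : GadgetVert G x}
    (hzs : (gadgetGraph G x).Adj z s) (hzt : (gadgetGraph G x).Adj z t)
    (hst : (gadgetGraph G x).Adj s t)
    (hzo : z ≠ Sum.inl o)
    (hgz : gdist G x z (Sum.inl o) ≤ 1/2)
    (hgs : gdist G x s (Sum.inl o) ≤ 1/2)
    (hM : χ (Sum.inl o) = χ z) : False := by
  obtain ⟨s', hOs', hχs', hs'ne⟩ := partner hχ2 hχc hzs (le_trans hgz (half_le_r hr)) hM hzo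
  obtain ⟨t', hOt', hχt', ht'ne⟩ := partner hχ2 hχc hzt (le_trans hgz (half_le_r hr)) hM hzo
  obtain ⟨B⟩ := endbundle hOs'
  obtain ⟨a2, b2, i2, j2, hp2, ht'eq, -⟩ := adj_inl_elim hOt'
  have hgt' : gdist G x t' (Sum.inl o) ≤ 1/2 := by
    have hadj2 : (gadgetGraph G x).Adj (Sum.inr ⟨(a2,b2,i2,j2),hp2⟩) (Sum.inl o) := by
      rw [← ht'eq]; exact hOt'.symm
    rw [ht'eq]
    exact le_of_le_of_eq (gdist_adj hadj2) (wt_inr_inl _ _)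
  have hgOs' : gdist G x (Sum.inl o) s' ≤ 1/2 := gdist_inl_adj hOs'
  have hd_ss' : gdist G x s s' ≤ (r : ℝ≥0∞) := by
    calc gdist G x s s' ≤ gdist G x s (Sum.inl o) + gdist G x (Sum.inl o) s' :=
          gdist_triangle _ _ _
      _ ≤ 1/2 + 1/2 := add_le_add hgs hgOs'
      _ = 1 := one_half_add
      _ ≤ (r : ℝ≥0∞) := one_le_r hr
  obtain ⟨z₁, hz₁adj, hz₁χ, hz₁ne⟩ := partner hχ2 hχc hst hd_ss' hχs' hs'ne.symm
  rcases B.N0 z₁ hz₁adj with h1 | h1 | h1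
  · -- z₁ = O : impossible
    rw [h1] at hz₁χ
    exact (F1a hχ2 hOt') (hz₁χ.trans hχt'.symm)
  · -- z₁ = v1
    have hχv1 : χ B.v1 = χ t' := by rw [← h1]; exact hz₁χ.trans hχt'.symm
    have ht'v1 : t' ≠ B.v1 := by
      intro he
      have hadj1 : (gadgetGraph G x).Adj B.v1 (Sum.inl o) := by rw [← he]; exact hOt'.symm
      rcases B.N1 _ hadj1 with h' | h' | h'
      · exact B.dOy h'.symm
      · exact B.dO2 h'.symm
      · exact B.dO3 h'.symm
    have hdt'v1 : gdist G x t' B.v1 ≤ (r : ℝ≥0∞) := by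
      calc gdist G x t' B.v1 ≤ gdist G x t' (Sum.inl o) + gdist G x (Sum.inl o) B.v1 :=
            gdist_triangle _ _ _
        _ ≤ 1/2 + 1/2 := add_le_add hgt' B.gO1
        _ = 1 := one_half_add
        _ ≤ (r : ℝ≥0∞) := one_le_r hr
    obtain ⟨ω, hω1, hω2, hω3⟩ := partner hχ2 hχc hOt'.symm hdt'v1 hχv1 ht'v1
    rcases B.N1 ω hω1 with h' | h' | h'
    · rw [h'] at hω2
      exact (F1a hχ2 B.aO0) hω2.symm
    · rw [h'] at hω2
      exact (F1b hχ2 B.aO0.symm B.a02 B.dO2.symm) hω2.symm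
    · rw [h'] at hω2
      exact O3kill hr hχ2 hχc B hω2.symm
  · -- z₁ = v2
    have hχv2 : χ B.v2 = χ t' := by rw [← h1]; exact hz₁χ.trans hχt'.symm
    have ht'v2 : t' ≠ B.v2 := by
      intro he
      have hadj1 : (gadgetGraph G x).Adj B.v2 (Sum.inl o) := by rw [← he]; exact hOt'.symm
      rcases B.N2 _ hadj1 with h' | h' | h'
      · exact B.dOy h'.symm
      · exact B.dO1 h'.symm
      · exact B.dO4 h'.symm
    have hdt'v2 : gdist G x t' B.v2 ≤ (r : ℝ≥0∞) := by
      calc gdist G x t' B.v2 ≤ gdist G x t' (Sum.inl o) + gdist G x (Sum.inl o) B.v2 :=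
            gdist_triangle _ _ _
        _ ≤ 1/2 + 1/2 := add_le_add hgt' B.gO2
        _ = 1 := one_half_add
        _ ≤ (r : ℝ≥0∞) := one_le_r hr
    obtain ⟨ω, hω1, hω2, hω3⟩ := partner hχ2 hχc hOt'.symm hdt'v2 hχv2 ht'v2
    rcases B.N2 ω hω1 with h' | h' | h'
    · rw [h'] at hω2
      exact (F1a hχ2 B.aO0) hω2.symm
    · rw [h'] at hω2
      exact (F1b hχ2 B.aO0.symm B.a01 B.dO1.symm) hω2.symm
    · rw [h'] at hω2
      exact O4kill hr hχ2 hχc B hω2.symm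

end LCLGadgetThms

namespace LCLGadgetThms
open LCLGadget SimpleGraph

variable {V : Type} [LinearOrder V] {G : SimpleGraph V} {x : Sym2 V → ℕ}

/-- The `k`-th vertex along the chain replacing the edge `{a,b}`. -/
def cv (a b : V) (k : ℕ) (h : a < b ∧ G.Adj a b ∧ k < 6 * x s(a, b)) : GadgetVert G x :=
  Sum.inr ⟨(a, b, k / 6, ⟨k % 6, by omega⟩), ⟨h.1, h.2.1, by
    show k / 6 < x s(a,b); have := h.2.2; omega⟩⟩

lemma cv_congr {a b : V} {k k' : ℕ} {h h'} (he : k = k') : cv (G := G) (x := x) a b k h = cv a b k' h' := by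
  subst he; rfl

lemma cv_inj {a b : V} {k k' : ℕ} {h h'} (he : cv (G := G) (x := x) a b k h = cv a b k' h') : k = k' := by
  have := congrArg Subtype.val (Sum.inr.inj he)
  simp only [cv, Prod.ext_iff, Fin.ext_iff] at this
  omega

lemma inr_eq_cv {a b : V} {i : ℕ} {j : Fin 6} {hp} {k : ℕ} (hk)
    (h1 : i = k / 6) (h2 : (j : ℕ) = k % 6) :
    (Sum.inr ⟨(a,b,i,j),hp⟩ : GadgetVert G x) = cv a b k hk := by
  subst h1
  apply congrArg Sum.inr
  apply Subtype.ext
  simp only [cv, Prod.ext_iff, Fin.ext_iff]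
  exact ⟨trivial, trivial, trivial, h2⟩

lemma AAdj_iff_val (u v : Fin 6) : AAdj u v ↔
    (u.val = 0 ∧ v.val = 1) ∨ (u.val = 0 ∧ v.val = 2) ∨ (u.val = 1 ∧ v.val = 2) ∨
    (u.val = 1 ∧ v.val = 3) ∨ (u.val = 2 ∧ v.val = 4) ∨ (u.val = 3 ∧ v.val = 4) ∨
    (u.val = 3 ∧ v.val = 5) ∨ (u.val = 4 ∧ v.val = 5) := by
  revert u v; decide

lemma cv_adj_same {a b : V} {k k' : ℕ} (hk hk') (hdiv : k / 6 = k' / 6)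
    (hA : AAdj ⟨k % 6, by omega⟩ ⟨k' % 6, by omega⟩) :
    (gadgetGraph G x).Adj (cv a b k hk) (cv a b k' hk') := by
  have base := adj_gadget (G := G) (x := x) (a := a) (b := b) (i := k / 6)
    (j := ⟨k % 6, by omega⟩) (j' := ⟨k' % 6, by omega⟩)
    ⟨hk.1, hk.2.1, by show k/6 < x s(a,b); have := hk.2.2; omega⟩
    ⟨hk'.1, hk'.2.1, by show k/6 < x s(a,b); have := hk.2.2; omega⟩ hA
  rwa [inr_eq_cv hk rfl rfl, inr_eq_cv hk' hdiv rfl] at base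

lemma cv_adj_chain {a b : V} {k : ℕ} (hk hk') (ht : k % 6 = 5) :
    (gadgetGraph G x).Adj (cv a b k hk) (cv a b (k+1) hk') := by
  have base := adj_chain (G := G) (x := x) (a := a) (b := b) (i := k / 6)
    ⟨hk.1, hk.2.1, by show k/6 < x s(a,b); have := hk.2.2; omega⟩
    ⟨hk.1, hk.2.1, by show k/6 + 1 < x s(a,b); have := hk'.2.2; omega⟩
  rwa [inr_eq_cv hk rfl (by rw [show ((5:Fin 6):ℕ) = 5 from rfl]; omega),
    inr_eq_cv hk' (by omega) (by rw [show ((0:Fin 6):ℕ) = 0 from rfl]; omega)] at base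

lemma cv_adj_step {a b : V} {k k' : ℕ} (hk hk')
    (hcase : (k' = k + 1 ∧ k % 6 ≠ 2) ∨ (k' = k + 2 ∧ k % 6 < 4)) :
    (gadgetGraph G x).Adj (cv a b k hk) (cv a b k' hk') := by
  rcases hcase with ⟨rfl, hc⟩ | ⟨rfl, hc⟩
  · by_cases h5 : k % 6 = 5
    · exact cv_adj_chain hk hk' h5
    · have hA : AAdj (⟨k % 6, by omega⟩ : Fin 6) (⟨(k+1) % 6, by omega⟩ : Fin 6) := by
        rw [AAdj_iff_val]; simp only [Fin.val_mk]; omega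
      exact cv_adj_same hk hk' (by omega) hA
  · have hA : AAdj (⟨k % 6, by omega⟩ : Fin 6) (⟨(k+2) % 6, by omega⟩ : Fin 6) := by
      rw [AAdj_iff_val]; simp only [Fin.val_mk]; omega
    exact cv_adj_same hk hk' (by omega) hA

/-- Characterization of the neighbors of a chain vertex. -/
lemma neigh_cv {a b : V} {k : ℕ} (hk) {z : GadgetVert G x}
    (hadj : (gadgetGraph G x).Adj (cv a b k hk) z) :
    (z = Sum.inl a ∧ k = 0) ∨ (z = Sum.inl b ∧ k = 6 * x s(a,b) - 1) ∨
    (∃ k' hk', z = cv a b k' hk' ∧ k' ≠ k ∧ k' ≤ k + 2 ∧ k ≤ k' + 2) := by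
  have hxk := hk.2.2
  rcases adj_inr_elim hadj with ⟨rfl,h2,h3⟩|⟨rfl,h2,h3⟩|⟨j',h',rfl,hA⟩|⟨h',h5,rfl⟩|⟨i0,h',hi,h0,rfl⟩
  · have h3' : k % 6 = 0 := congrArg Fin.val h3
    exact Or.inl ⟨rfl, by omega⟩
  · have h3' : k % 6 = 5 := congrArg Fin.val h3
    exact Or.inr (Or.inl ⟨rfl, by omega⟩)
  · have hj := j'.isLt
    have hAv : (j' : ℕ) ≠ k % 6 ∧ (j' : ℕ) ≤ k % 6 + 2 ∧ k % 6 ≤ (j' : ℕ) + 2 := by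
      rcases hA with h | h <;> rw [AAdj_iff_val] at h <;>
        simp only [Fin.val_mk] at h <;> omega
    refine Or.inr (Or.inr ⟨6 * (k / 6) + (j' : ℕ), ⟨hk.1, hk.2.1, by omega⟩, ?_, by omega, by omega, by omega⟩)
    exact inr_eq_cv _ (by omega) (by omega)
  · have h5' : k % 6 = 5 := congrArg Fin.val h5
    have hb := h'.2.2
    refine Or.inr (Or.inr ⟨k + 1, ⟨hk.1, hk.2.1, by
      show k + 1 < 6 * x s(a,b)
      have : k / 6 + 1 < x s(a,b) := hb
      omega⟩, ?_, by omega, by omega, by omega⟩)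
    exact inr_eq_cv _ (by omega) (by rw [show ((0:Fin 6):ℕ) = 0 from rfl]; omega)
  · have h0' : k % 6 = 0 := congrArg Fin.val h0
    refine Or.inr (Or.inr ⟨k - 1, ⟨hk.1, hk.2.1, by omega⟩, ?_, by omega, by omega, by omega⟩)
    exact inr_eq_cv _ (by omega) (by rw [show ((5:Fin 6):ℕ) = 5 from rfl]; omega)

end LCLGadgetThms

namespace LCLGadgetThms
open LCLGadget SimpleGraph

variable {V : Type} [LinearOrder V] {G : SimpleGraph V} {x : Sym2 V → ℕ}

/-- Step towards the beginning of the chain. -/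
def lstep (k : ℕ) : ℕ := if k % 6 ≤ 1 then k - 1 else k - 2

lemma lstep_bounds (k : ℕ) : k - 2 ≤ lstep k ∧ lstep k ≤ k - 1 := by
  unfold lstep; split <;> omega

lemma lstep_adj {a b : V} {k : ℕ} (h1 : 1 ≤ k) (hk hls) :
    (gadgetGraph G x).Adj (cv a b (lstep k) hls) (cv a b k hk) := by
  rcases le_or_gt (k % 6) 1 with h | h
  · have hl : lstep k = k - 1 := by unfold lstep; rw [if_pos h]
    exact cv_adj_step _ _ (Or.inl ⟨by omega, by omega⟩)
  · have hl : lstep k = k - 2 := by unfold lstep; rw [if_neg (by omega)]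
    exact cv_adj_step _ _ (Or.inr ⟨by omega, by omega⟩)

lemma gdist_cv_left {a b : V} :
    ∀ k, ∀ (hk h0), gdist G x (cv a b k hk) (cv a b 0 h0) ≤ 0 := by
  intro k
  induction k using Nat.strong_induction_on with
  | _ k IH =>
    intro hk h0
    rcases Nat.eq_zero_or_pos k with rfl | hpos
    · exact gdist_self _
    · have hls : lstep k < 6 * x s(a,b) := by
        have := (lstep_bounds k).2; have := hk.2.2; omega
      have hstep := (lstep_adj hpos hk ⟨hk.1, hk.2.1, hls⟩).symm
      calc gdist G x (cv a b k hk) (cv a b 0 h0)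
          ≤ gdist G x (cv a b k hk) (cv a b (lstep k) ⟨hk.1, hk.2.1, hls⟩)
            + gdist G x (cv a b (lstep k) ⟨hk.1, hk.2.1, hls⟩) (cv a b 0 h0) :=
            gdist_triangle _ _ _
        _ ≤ 0 + 0 := add_le_add (gdist_adj_inr hstep)
            (IH (lstep k) (by have := (lstep_bounds k).2; omega) _ h0)
        _ = 0 := by rw [add_zero]

lemma gdist_cv_right {a b : V} :
    ∀ k, ∀ (hk h0), gdist G x (cv a b 0 h0) (cv a b k hk) ≤ 0 := by
  intro k
  induction k using Nat.strong_induction_on with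
  | _ k IH =>
    intro hk h0
    rcases Nat.eq_zero_or_pos k with rfl | hpos
    · exact gdist_self _
    · have hls : lstep k < 6 * x s(a,b) := by
        have := (lstep_bounds k).2; have := hk.2.2; omega
      have hstep := lstep_adj hpos hk ⟨hk.1, hk.2.1, hls⟩
      calc gdist G x (cv a b 0 h0) (cv a b k hk)
          ≤ gdist G x (cv a b 0 h0) (cv a b (lstep k) ⟨hk.1, hk.2.1, hls⟩)
            + gdist G x (cv a b (lstep k) ⟨hk.1, hk.2.1, hls⟩) (cv a b k hk) :=
            gdist_triangle _ _ _
        _ ≤ 0 + 0 := add_le_add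
            (IH (lstep k) (by have := (lstep_bounds k).2; omega) _ h0)
            (gdist_adj_inr hstep)
        _ = 0 := by rw [add_zero]

lemma gdist_cv_cv {a b : V} {k k' : ℕ} (hk hk') :
    gdist G x (cv a b k hk) (cv a b k' hk') ≤ 0 := by
  have h0 : (0:ℕ) < 6 * x s(a,b) := by have := hk.2.2; omega
  calc gdist G x (cv a b k hk) (cv a b k' hk')
      ≤ gdist G x (cv a b k hk) (cv a b 0 ⟨hk.1, hk.2.1, h0⟩)
        + gdist G x (cv a b 0 ⟨hk.1, hk.2.1, h0⟩) (cv a b k' hk') := gdist_triangle _ _ _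
    _ ≤ 0 + 0 := add_le_add (gdist_cv_left _ _ _) (gdist_cv_right _ _ _)
    _ = 0 := by rw [add_zero]

lemma gdist_cv_a {a b : V} {k : ℕ} (hk) :
    gdist G x (cv a b k hk) (Sum.inl a) ≤ 1/2 := by
  have h0 : (0:ℕ) < 6 * x s(a,b) := by have := hk.2.2; omega
  have hadj : (gadgetGraph G x).Adj (cv a b 0 ⟨hk.1, hk.2.1, h0⟩) (Sum.inl a) :=
    (adj_inl_a ⟨hk.1, hk.2.1, by show (0:ℕ) < x s(a,b); omega⟩).symm
  calc gdist G x (cv a b k hk) (Sum.inl a)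
      ≤ gdist G x (cv a b k hk) (cv a b 0 ⟨hk.1, hk.2.1, h0⟩)
        + gdist G x (cv a b 0 ⟨hk.1, hk.2.1, h0⟩) (Sum.inl a) := gdist_triangle _ _ _
    _ ≤ 0 + 1/2 := add_le_add (gdist_cv_left _ _ _)
        (le_of_le_of_eq (gdist_adj hadj) (wt_inr_inl _ _))
    _ = 1/2 := by rw [zero_add]

variable {r : ℕ} {χ : GadgetVert G x → ℕ}

/-- Chain vertices at positions within distance 2 get distinct colors. -/
lemma close_kill (hχ2 : Dist2Coloring G x χ) {a b : V} {k k' : ℕ} (hk hk')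
    (hlt : k < k') (hle : k' ≤ k + 2) :
    χ (cv a b k hk) ≠ χ (cv a b k' hk') := by
  have hne : cv (G := G) (x := x) a b k hk ≠ cv a b k' hk' := fun he => by
    have := cv_inj he; omega
  have hd : k' = k + 1 ∨ k' = k + 2 := by omega
  rcases hd with rfl | rfl
  · by_cases h2 : k % 6 = 2
    · have hk1 : k - 1 < 6 * x s(a,b) := by have := hk.2.2; omega
      have w1 : (gadgetGraph G x).Adj (cv a b (k-1) ⟨hk.1, hk.2.1, hk1⟩) (cv a b k hk) :=
        cv_adj_step _ _ (Or.inl ⟨by omega, by omega⟩)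
      have w2 : (gadgetGraph G x).Adj (cv a b (k-1) ⟨hk.1, hk.2.1, hk1⟩) (cv a b (k+1) hk') :=
        cv_adj_step _ _ (Or.inr ⟨by omega, by omega⟩)
      exact F1b hχ2 w1 w2 hne
    · exact F1a hχ2 (cv_adj_step _ _ (Or.inl ⟨rfl, h2⟩))
  · by_cases h4 : k % 6 < 4
    · exact F1a hχ2 (cv_adj_step _ _ (Or.inr ⟨rfl, h4⟩))
    · have hk1 : k + 1 < 6 * x s(a,b) := by have := hk'.2.2; omega
      have w1 : (gadgetGraph G x).Adj (cv a b (k+1) ⟨hk.1, hk.2.1, hk1⟩) (cv a b k hk) :=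
        (cv_adj_step _ _ (Or.inl ⟨rfl, by omega⟩)).symm
      have w2 : (gadgetGraph G x).Adj (cv a b (k+1) ⟨hk.1, hk.2.1, hk1⟩) (cv a b (k+2) hk') :=
        cv_adj_step _ _ (Or.inl ⟨by omega, by omega⟩)
      exact F1b hχ2 w1 w2 hne

/-- Every chain vertex lies on a triangle within the chain. -/
lemma tri_cv {a b : V} {m : ℕ} (hm) :
    ∃ s t : GadgetVert G x, (gadgetGraph G x).Adj (cv a b m hm) s ∧
      (gadgetGraph G x).Adj (cv a b m hm) t ∧ (gadgetGraph G x).Adj s t ∧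
      gdist G x s (Sum.inl a) ≤ 1/2 := by
  have hxb : 6 * (m / 6) + 5 < 6 * x s(a,b) := by have := hm.2.2; omega
  have P : ∀ d : ℕ, d ≤ 5 → a < b ∧ G.Adj a b ∧ 6 * (m / 6) + d < 6 * x s(a,b) :=
    fun d hd => ⟨hm.1, hm.2.1, by omega⟩
  have h6 : m % 6 = 0 ∨ m % 6 = 1 ∨ m % 6 = 2 ∨ m % 6 = 3 ∨ m % 6 = 4 ∨ m % 6 = 5 := by omega
  rcases h6 with ht | ht | ht | ht | ht | ht
  · have e : cv (G := G) (x := x) a b m hm = cv a b (6*(m/6)) (P 0 (by omega)) :=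
      cv_congr (by omega)
    rw [e]
    exact ⟨_, _, cv_adj_step _ (P 1 (by omega)) (Or.inl ⟨by omega, by omega⟩),
      cv_adj_step _ (P 2 (by omega)) (Or.inr ⟨by omega, by omega⟩),
      cv_adj_step (P 1 (by omega)) (P 2 (by omega)) (Or.inl ⟨by omega, by omega⟩),
      gdist_cv_a _⟩
  · have e : cv (G := G) (x := x) a b m hm = cv a b (6*(m/6)+1) (P 1 (by omega)) :=
      cv_congr (by omega)
    rw [e]
    exact ⟨_, _, (cv_adj_step (P 0 (by omega)) _ (Or.inl ⟨by omega, by omega⟩)).symm,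
      cv_adj_step _ (P 2 (by omega)) (Or.inl ⟨by omega, by omega⟩),
      cv_adj_step (P 0 (by omega)) (P 2 (by omega)) (Or.inr ⟨by omega, by omega⟩),
      gdist_cv_a _⟩
  · have e : cv (G := G) (x := x) a b m hm = cv a b (6*(m/6)+2) (P 2 (by omega)) :=
      cv_congr (by omega)
    rw [e]
    exact ⟨_, _, (cv_adj_step (P 0 (by omega)) _ (Or.inr ⟨by omega, by omega⟩)).symm,
      (cv_adj_step (P 1 (by omega)) _ (Or.inl ⟨by omega, by omega⟩)).symm,
      cv_adj_step (P 0 (by omega)) (P 1 (by omega)) (Or.inl ⟨by omega, by omega⟩),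
      gdist_cv_a _⟩
  · have e : cv (G := G) (x := x) a b m hm = cv a b (6*(m/6)+3) (P 3 (by omega)) :=
      cv_congr (by omega)
    rw [e]
    exact ⟨_, _, cv_adj_step _ (P 4 (by omega)) (Or.inl ⟨by omega, by omega⟩),
      cv_adj_step _ (P 5 (by omega)) (Or.inr ⟨by omega, by omega⟩),
      cv_adj_step (P 4 (by omega)) (P 5 (by omega)) (Or.inl ⟨by omega, by omega⟩),
      gdist_cv_a _⟩
  · have e : cv (G := G) (x := x) a b m hm = cv a b (6*(m/6)+4) (P 4 (by omega)) :=
      cv_congr (by omega)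
    rw [e]
    exact ⟨_, _, (cv_adj_step (P 3 (by omega)) _ (Or.inl ⟨by omega, by omega⟩)).symm,
      cv_adj_step _ (P 5 (by omega)) (Or.inl ⟨by omega, by omega⟩),
      cv_adj_step (P 3 (by omega)) (P 5 (by omega)) (Or.inr ⟨by omega, by omega⟩),
      gdist_cv_a _⟩
  · have e : cv (G := G) (x := x) a b m hm = cv a b (6*(m/6)+5) (P 5 (by omega)) :=
      cv_congr (by omega)
    rw [e]
    exact ⟨_, _, (cv_adj_step (P 3 (by omega)) _ (Or.inr ⟨by omega, by omega⟩)).symm,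
      (cv_adj_step (P 4 (by omega)) _ (Or.inl ⟨by omega, by omega⟩)).symm,
      cv_adj_step (P 3 (by omega)) (P 4 (by omega)) (Or.inl ⟨by omega, by omega⟩),
      gdist_cv_a _⟩

end LCLGadgetThms

namespace LCLGadgetThms
open LCLGadget SimpleGraph

variable {V : Type} [LinearOrder V] {G : SimpleGraph V} {x : Sym2 V → ℕ}
variable {r : ℕ} {χ : GadgetVert G x → ℕ}

/-- Main induction: no two distinct chain vertices of one expanded edge share a color. -/
lemma master (hr : 0 < r) (hχ2 : Dist2Coloring G x χ) (hχc : EdgeConsistent G x r χ)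
    {a b : V} (hab : a < b) (hG : G.Adj a b) :
    ∀ M k k', ∀ (hk : k < 6 * x s(a,b)) (hk' : k' < 6 * x s(a,b)), k ≠ k' → k ≤ M → k' ≤ M →
      χ (cv a b k ⟨hab, hG, hk⟩) = χ (cv a b k' ⟨hab, hG, hk'⟩) → False := by
  intro M
  induction M using Nat.strong_induction_on with
  | _ M IH =>
    have aux : ∀ u u' (hu : u < 6 * x s(a,b)) (hu' : u' < 6 * x s(a,b)), u < u' → u' ≤ M →
        χ (cv a b u ⟨hab, hG, hu⟩) = χ (cv a b u' ⟨hab, hG, hu'⟩) → False := by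
      intro u u' hu hu' hlt hu'M hequ
      by_cases hclose : u' ≤ u + 2
      · exact close_kill hχ2 _ _ hlt hclose hequ
      · have h3 : u + 3 ≤ u' := by omega
        have hls : lstep u' < 6 * x s(a,b) := by have := (lstep_bounds u').2; omega
        have hstep : (gadgetGraph G x).Adj (cv a b u' ⟨hab,hG,hu'⟩)
            (cv a b (lstep u') ⟨hab,hG,hls⟩) := (lstep_adj (by omega) _ _).symm
        have hgd : gdist G x (cv a b u' ⟨hab,hG,hu'⟩) (cv a b u ⟨hab,hG,hu⟩) ≤ (r:ℝ≥0∞) :=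
          le_trans (gdist_cv_cv _ _) zero_le
        have hnecc : cv (G := G) (x := x) a b u' ⟨hab,hG,hu'⟩ ≠ cv a b u ⟨hab,hG,hu⟩ :=
          fun he => by have := cv_inj he; omega
        obtain ⟨u'', hadj'', hχ'', hne''⟩ := partner hχ2 hχc hstep hgd hequ hnecc
        rcases neigh_cv _ hadj'' with ⟨rfl, hu0⟩ | ⟨rfl, hub⟩ | ⟨k2, hk2, rfl, hk2ne, hk2le, hk2ge⟩
        · obtain ⟨s, t, hzs, hzt, hst2, hgs⟩ := tri_cv (m := lstep u') ⟨hab,hG,hls⟩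
          exact mixedkill hr hχ2 hχc hzs hzt hst2 (by simp [cv]) (gdist_cv_a _) hgs hχ''
        · exact absurd hub (by omega)
        · refine IH (u' - 1) (by omega) (lstep u') k2 hls hk2.2.2 ?_ ?_ ?_ ?_
          · intro hcontra; exact hne'' (cv_congr hcontra.symm)
          · have := (lstep_bounds u').2; omega
          · omega
          · exact hχ''.symm
    intro k k' hk hk' hne hkM hk'M heq
    rcases lt_trichotomy k k' with hlt | he | hlt
    · exact aux k k' hk hk' hlt hk'M heq
    · exact hne he
    · exact aux k' k hk' hk hlt hkM heq.symm

end LCLGadgetThms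

namespace LCLGadgetThms
open LCLGadget

variable {V : Type} [LinearOrder V]

theorem stmt5 (G : SimpleGraph V) (x : Sym2 V → ℕ) (r : ℕ) (hr : 0 < r)
    (hgad : CorrectlyGadgeted G x r)
    (χ : GadgetVert G x → ℕ)
    (hχ2 : Dist2Coloring G x χ)
    (hχc : EdgeConsistent G x r χ) :
    ∀ p q : GadgetAux G x, p ≠ q →
      p.val.1 = q.val.1 → p.val.2.1 = q.val.2.1 →
      χ (Sum.inr p) ≠ χ (Sum.inr q) := by
  intro p q hpq h1 h2 heq
  obtain ⟨⟨a1,b1,i1,j1⟩, hp1⟩ := p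
  obtain ⟨⟨a2,b2,i2,j2⟩, hp2⟩ := q
  have ha : a1 = a2 := h1
  have hb : b1 = b2 := h2
  subst ha; subst hb
  have hj1 := j1.isLt
  have hj2 := j2.isLt
  have hpa : a1 < b1 := hp1.1
  have hpb : G.Adj a1 b1 := hp1.2.1
  have hpi1 : i1 < x s(a1,b1) := hp1.2.2
  have hpi2 : i2 < x s(a1,b1) := hp2.2.2
  have hk1 : 6*i1 + (j1:ℕ) < 6 * x s(a1,b1) := by omega
  have hk2 : 6*i2 + (j2:ℕ) < 6 * x s(a1,b1) := by omega
  have e1 : (Sum.inr ⟨(a1,b1,i1,j1),hp1⟩ : GadgetVert G x)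
      = cv a1 b1 (6*i1 + (j1:ℕ)) ⟨hpa, hpb, hk1⟩ := inr_eq_cv _ (by omega) (by omega)
  have e2 : (Sum.inr ⟨(a1,b1,i2,j2),hp2⟩ : GadgetVert G x)
      = cv a1 b1 (6*i2 + (j2:ℕ)) ⟨hpa, hpb, hk2⟩ := inr_eq_cv _ (by omega) (by omega)
  rw [e1, e2] at heq
  have hne : 6*i1 + (j1:ℕ) ≠ 6*i2 + (j2:ℕ) := by
    intro hcon
    apply hpq
    have hi : i1 = i2 := by omega
    have hj : j1 = j2 := Fin.ext (by omega)
    subst hi; subst hj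
    rfl
  exact master hr hχ2 hχc hpa hpb (max (6*i1 + (j1:ℕ)) (6*i2 + (j2:ℕ))) _ _ hk1 hk2 hne
    (le_max_left _ _) (le_max_right _ _) heq

end LCLGadgetThms
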